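/- If (b,a) is an n-good pair with s(n) = s > 2, then a ≤ f_{s-1} and b ≤ 2·f_{s-1}. -/
import Mathlib


def reaches (n : ℤ) (s : ℕ) : Prop :=
  ∃ a b : ℤ, 1 ≤ a ∧ 1 ≤ b ∧ n = a * (Nat.fib (s - 1) : ℤ) + b * (Nat.fib (s - 2) : ℤ)

def isSlow (n : ℤ) (s : ℕ) : Prop :=
  reaches n s ∧ ∀ s', reaches n s' → s' ≤ s

def isGood (n : ℤ) (s : ℕ) (b a : ℤ) : Prop :=
  1 ≤ a ∧ 1 ≤ b ∧ n = a * (Nat.fib (s - 1) : ℤ) + b * (Nat.fib (s - 2) : ℤ)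

theorem stmt6 (n : ℤ) (s : ℕ) (hs : isSlow n s) (hs2 : 2 < s)
    (a b : ℤ) (h : isGood n s b a) :
    a ≤ (Nat.fib (s - 1) : ℤ) ∧ b ≤ 2 * (Nat.fib (s - 1) : ℤ) := by
  obtain ⟨m, rfl⟩ : ∃ m, s = m + 3 := ⟨s - 3, by omega⟩
  have e1 : m + 3 - 1 = m + 2 := rfl
  have e2 : m + 3 - 2 = m + 1 := rfl
  obtain ⟨ha1, hb1, hn⟩ := h
  rw [e1, e2] at hn
  rw [e1]
  set F1 : ℤ := (Nat.fib (m + 1) : ℤ) with hF1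
  set F2 : ℤ := (Nat.fib (m + 2) : ℤ) with hF2
  set F3 : ℤ := (Nat.fib (m + 3) : ℤ) with hF3
  have hf3 : F3 = F2 + F1 := by
    rw [hF1, hF2, hF3, show m + 3 = (m + 1) + 2 from rfl, Nat.fib_add_two]
    push_cast; ring
  have hF1pos : 1 ≤ F1 := by
    have := Nat.fib_pos.mpr (show 0 < m + 1 by omega)
    rw [hF1]; exact_mod_cast this
  have hF2pos : 1 ≤ F2 := by
    have := Nat.fib_pos.mpr (show 0 < m + 2 by omega)
    rw [hF2]; exact_mod_cast this
  have hF3pos : 1 ≤ F3 := by linarith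
  have hF2le : F2 ≤ 2 * F1 := by
    have h1 : Nat.fib (m + 2) = Nat.fib m + Nat.fib (m + 1) := Nat.fib_add_two
    have h2 : Nat.fib m ≤ Nat.fib (m + 1) := Nat.fib_le_fib_succ
    rw [hF1, hF2]
    exact_mod_cast by omega
  have key : ∀ x y : ℤ, 1 ≤ x → n = x * F3 + y * F2 → y ≤ 0 := by
    intro x y hx hxy
    by_contra hy
    push_neg at hy
    have hr : reaches n (m + 4) := by
      refine ⟨x, y, hx, hy, ?_⟩
      have e3 : m + 4 - 1 = m + 3 := rfl
      have e4 : m + 4 - 2 = m + 2 := rfl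
      rw [e3, e4, ← hF3, ← hF2]; exact hxy
    have := hs.2 _ hr
    omega
  have main : (F2 + 1 ≤ a ∨ 2 * F2 + 1 ≤ b) → ∀ k : ℕ, a + (k : ℤ) * F3 ≤ b := by
    intro hyp k
    induction k with
    | zero =>
      have h0 := key b (a - b) hb1 (by rw [hn, hf3]; ring)
      push_cast; linarith
    | succ k ih =>
      have hx : 1 ≤ b - ((k : ℤ) + 1) * F2 := by
        rcases Nat.lt_or_ge k 2 with hk | hk
        · interval_cases k
          · rcases hyp with hA | hB
            · push_cast at ih ⊢; linarith
            · push_cast at ih ⊢; linarith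
          · rcases hyp with hA | hB
            · push_cast at ih ⊢; nlinarith
            · push_cast at ih ⊢; linarith
        · have hk2 : (2 : ℤ) ≤ (k : ℤ) := by exact_mod_cast hk
          have hkF1 : 2 * F1 ≤ (k : ℤ) * F1 := by nlinarith
          have hkF3 : (k : ℤ) * F3 = (k : ℤ) * F2 + (k : ℤ) * F1 := by rw [hf3]; ring
          nlinarith
      have hstep := key (b - ((k : ℤ) + 1) * F2) (a - b + ((k : ℤ) + 1) * F3) hx
        (by rw [hn, hf3]; ring)
      push_cast; linarith
  constructor
  · by_contra hA
    push_neg at hA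
    have h1 := main (Or.inl (by linarith)) b.toNat
    have h2 : ((b.toNat : ℤ)) = b := Int.toNat_of_nonneg (by linarith)
    rw [h2] at h1
    nlinarith
  · by_contra hB
    push_neg at hB
    have h1 := main (Or.inr (by linarith)) b.toNat
    have h2 : ((b.toNat : ℤ)) = b := Int.toNat_of_nonneg (by linarith)
    rw [h2] at h1
    nlinarith
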